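/- Let E = E_{−2} ⊕ E_{−1} be a graded vector space concentrated in degrees −2 and −1, let ∂: E_{−2} → E_{−1} be a linear map regarded as a symmetric vector valued 1-form l_1 of degree +1 on E (this is an L∞-structure with l_2 = l_3 = 0, since ∂² = 0 holds automatically by degree reasons), and let α be a symmetric vector valued 2-form of degree 0 on E, i.e. a skew-symmetric bilinear map α: E_{−1} × E_{−1} → E_{−2}. If S + α is a weak Nijenhuis vector valued form with respect to ∂, then [X,Y] := ∂(α(X,Y)) defines a Lie bracket on E_{−1}, and X·f := α(X,∂f) defines a representation of the Lie algebra (E_{−1},[·,·]) on E_{−2}, i.e. [X,Y]·f = X·(Y·f) − Y·(X·f) for all X, Y ∈ E_{−1} and f ∈ E_{−2}. -/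

import Mathlib

open scoped DirectSum
open Classical

noncomputable section

namespace RN

section Core

variable (𝕜 : Type) [Field 𝕜] [CharZero 𝕜]
variable (E : ℤ → Type) [∀ i, AddCommGroup (E i)] [∀ i, Module 𝕜 (E i)]

/-- Raw vector-valued forms on the graded vector space `E`: for every arity `n` and every
vector of (input) degrees `ι`, a function on homogeneous tuples with values in the total
graded space `⨁ i, E i`. -/
abbrev RawForm : Type :=
  ∀ n : ℕ, ∀ ι : Fin n → ℤ, (∀ j, E (ι j)) → ⨁ i, E i

/-- Multilinearity (in each slot, on homogeneous arguments). -/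
def IsMultilin (F : RawForm E) : Prop :=
  ∀ (n : ℕ) (ι : Fin n → ℤ) (x : ∀ j, E (ι j)) (j : Fin n) (a b : E (ι j)) (c : 𝕜),
    F n ι (Function.update x j (a + b)) =
        F n ι (Function.update x j a) + F n ι (Function.update x j b) ∧
      F n ι (Function.update x j (c • a)) = c • F n ι (Function.update x j a)

/-- Graded symmetry: swapping two adjacent homogeneous arguments multiplies the value
by the Koszul sign `(-1)^{|X||Y|}`. -/
def IsGradedSym (F : RawForm E) : Prop :=
  ∀ (n : ℕ) (ι : Fin n → ℤ) (x : ∀ j, E (ι j)) (p q : Fin n), (p : ℕ) + 1 = (q : ℕ) →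
    F n (fun j => ι (Equiv.swap p q j)) (fun j => x (Equiv.swap p q j)) =
      ((-1 : 𝕜) ^ (ι p * ι q)) • F n ι x

/-- `F` has degree `d`: its value on homogeneous arguments of degrees `ι` is homogeneous
of degree `(∑ j, ι j) + d`. -/
def IsOfDeg (d : ℤ) (F : RawForm E) : Prop :=
  ∀ (n : ℕ) (ι : Fin n → ℤ) (x : ∀ j, E (ι j)) (m : ℤ),
    m ≠ (∑ j, ι j) + d → F n ι x m = 0

/-- Symmetric vector valued form of degree `d`. -/
def IsSVF (d : ℤ) (F : RawForm E) : Prop :=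
  IsMultilin 𝕜 E F ∧ IsGradedSym 𝕜 E F ∧ IsOfDeg E d F

/-- `F` is (concentrated in) a `k`-form. -/
def IsArity (k : ℕ) (F : RawForm E) : Prop :=
  ∀ n, n ≠ k → ∀ (ι : Fin n → ℤ) (x : ∀ j, E (ι j)), F n ι x = 0

/-- `F` has no 0-form (curvature) component. -/
def NoCurv (F : RawForm E) : Prop :=
  ∀ (ι : Fin 0 → ℤ) (x : ∀ j, E (ι j)), F 0 ι x = 0

/-- `(k, n-k)`-shuffles of `Fin n`. -/
def IsShuffle (k : ℕ) {n : ℕ} (σ : Equiv.Perm (Fin n)) : Prop :=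
  ∀ i j : Fin n, i < j → ((j : ℕ) < k ∨ k ≤ (i : ℕ)) → σ i < σ j

/-- The Koszul sign of the rearrangement `(X_{σ(1)},…,X_{σ(n)})` of homogeneous elements
of degrees `ι`. -/
def koszulSign {n : ℕ} (ι : Fin n → ℤ) (σ : Equiv.Perm (Fin n)) : 𝕜 :=
  ∏ p ∈ Finset.univ.filter (fun p : Fin n × Fin n => p.1 < p.2 ∧ σ p.2 < σ p.1),
    (-1 : 𝕜) ^ (ι (σ p.1) * ι (σ p.2))

/-- Prepend a degree to a vector of degrees. -/
def dcons {n : ℕ} (m : ℤ) (rest : Fin n → ℤ) : Fin (n + 1) → ℤ :=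
  fun j => if h : (j : ℕ) = 0 then m else rest ⟨(j : ℕ) - 1, by have := j.isLt; omega⟩

/-- Prepend a homogeneous element to a tuple of homogeneous elements. -/
def dconsV {n : ℕ} {m : ℤ} {rest : Fin n → ℤ} (v : E m) (xs : ∀ i, E (rest i)) :
    ∀ j : Fin (n + 1), E (dcons m rest j) := fun j => by
  unfold dcons
  by_cases h : (j : ℕ) = 0
  · rw [dif_pos h]; exact v
  · rw [dif_neg h]; exact xs ⟨(j : ℕ) - 1, by have := j.isLt; omega⟩

/-- The insertion operator `ι_F G`, summing over shuffles with Koszul signs. -/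
def ins (F G : RawForm E) : RawForm E :=
  fun n ι x =>
    ∑ k : Fin (n + 1),
      ∑ σ ∈ Finset.univ.filter (fun σ : Equiv.Perm (Fin n) => IsShuffle (k : ℕ) σ),
        koszulSign 𝕜 ι σ •
          DFinsupp.sum
            (F (k : ℕ)
              (fun i => ι (σ ⟨(i : ℕ), by have h1 := i.isLt; have h2 := k.isLt; omega⟩))
              (fun i => x (σ ⟨(i : ℕ), by have h1 := i.isLt; have h2 := k.isLt; omega⟩)))
            (fun m v =>
              G (n - (k : ℕ) + 1)
                (dcons m
                  (fun i => ι (σ ⟨(k : ℕ) + (i : ℕ), by have h1 := i.isLt; have h2 := k.isLt; omega⟩)))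
                (dconsV E v
                  (fun i => x (σ ⟨(k : ℕ) + (i : ℕ), by have h1 := i.isLt; have h2 := k.isLt; omega⟩))))

/-- The Richardson–Nijenhuis bracket `[F,G]_RN = ι_F G - (-1)^{dK·dL} ι_G F` of forms
of degrees `dK` and `dL`. -/
def rnb (dK dL : ℤ) (F G : RawForm E) : RawForm E :=
  fun n ι x => ins 𝕜 E F G n ι x - ((-1 : 𝕜) ^ (dK * dL)) • ins 𝕜 E G F n ι x

/-- An element of the graded vector space, regarded as a vector valued 0-form. -/
def ofElem (v : ⨁ i, E i) : RawForm E := fun n _ _ => if n = 0 then v else 0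

/-- The Euler map `S(X) = -|X|·X`, a vector valued 1-form of degree 0. -/
def euler : RawForm E :=
  fun n ι x =>
    if h : n = 1 then
      (-(ι ⟨0, by omega⟩)) • DirectSum.of E (ι ⟨0, by omega⟩) (x ⟨0, by omega⟩)
    else 0

/-- The identity map of `E`, regarded as a vector valued 1-form of degree 0. -/
def idF : RawForm E :=
  fun n ι x =>
    if h : n = 1 then DirectSum.of E (ι ⟨0, by omega⟩) (x ⟨0, by omega⟩) else 0

/-- The arity-`k` component of a vector valued form. -/
def comp (F : RawForm E) (k : ℕ) : RawForm E :=
  fun n ι x => if n = k then F n ι x else 0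

end Core

/-- A linear map `∂ : E_{-2} → E_{-1}` regarded as a symmetric vector valued 1-form of
degree `+1` on the graded vector space `E` (concentrated in degrees `-2, -1`). -/
def delF (𝕜 : Type) [Field 𝕜] [CharZero 𝕜]
    (E : ℤ → Type) [∀ i, AddCommGroup (E i)] [∀ i, Module 𝕜 (E i)]
    (pd : E (-2) →ₗ[𝕜] E (-1)) : RawForm E :=
  fun n ι x =>
    if h : n = 1 then
      if h0 : ι ⟨0, by omega⟩ = -2 then
        DirectSum.of E (-1) (pd (cast (congrArg E h0) (x ⟨0, by omega⟩)))
      else 0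
    else 0

/-- A skew-symmetric bilinear map `α : E_{-1} × E_{-1} → E_{-2}` regarded as a symmetric
vector valued 2-form of degree 0 on the graded vector space `E`. -/
def alF (𝕜 : Type) [Field 𝕜] [CharZero 𝕜]
    (E : ℤ → Type) [∀ i, AddCommGroup (E i)] [∀ i, Module 𝕜 (E i)]
    (a : E (-1) →ₗ[𝕜] E (-1) →ₗ[𝕜] E (-2)) : RawForm E :=
  fun n ι x =>
    if h : n = 2 then
      if h0 : ι ⟨0, by omega⟩ = -1 then
        if h1 : ι ⟨1, by omega⟩ = -1 then
          DirectSum.of E (-2)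
            (a (cast (congrArg E h0) (x ⟨0, by omega⟩))
              (cast (congrArg E h1) (x ⟨1, by omega⟩)))
        else 0
      else 0
    else 0


section Compute
variable (𝕜 : Type) [Field 𝕜] [CharZero 𝕜]
variable (E : ℤ → Type) [∀ i, AddCommGroup (E i)] [∀ i, Module 𝕜 (E i)]
variable (pd : E (-2) →ₗ[𝕜] E (-1)) (a : E (-1) →ₗ[𝕜] E (-1) →ₗ[𝕜] E (-2))

instance (k n : ℕ) (σ : Equiv.Perm (Fin n)) : Decidable (IsShuffle k σ) := by
  unfold IsShuffle; infer_instance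

lemma filter_univ_eq {α : Type} [Fintype α] [DecidableEq α] (p : α → Prop)
    {inst : DecidablePred p} (S : Finset α) (h : ∀ x, p x ↔ x ∈ S) :
    @Finset.filter _ p inst Finset.univ = S := by
  ext y; simp [Finset.mem_filter, h]

/-- `N = S + α`. -/
def NF : RawForm E := euler E + alF 𝕜 E a
/-- `μ = ∂`. -/
def MF : RawForm E := delF 𝕜 E pd
/-- `P = [N, μ]`. -/
def PF : RawForm E := rnb 𝕜 E 0 1 (NF 𝕜 E a) (MF 𝕜 E pd)
/-- `Q = [N, P]`. -/
def QF : RawForm E := rnb 𝕜 E 0 1 (NF 𝕜 E a) (PF 𝕜 E pd a)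

lemma NF_apply (n : ℕ) (ι : Fin n → ℤ) (x : ∀ j, E (ι j)) :
    NF 𝕜 E a n ι x = euler E n ι x + alF 𝕜 E a n ι x := rfl

lemma euler_ne (n : ℕ) (h : n ≠ 1) (ι : Fin n → ℤ) (x : ∀ j, E (ι j)) :
    euler E n ι x = 0 := dif_neg h

lemma alF_ne (n : ℕ) (h : n ≠ 2) (ι : Fin n → ℤ) (x : ∀ j, E (ι j)) :
    alF 𝕜 E a n ι x = 0 := dif_neg h

lemma delF_ne (n : ℕ) (h : n ≠ 1) (ι : Fin n → ℤ) (x : ∀ j, E (ι j)) :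
    delF 𝕜 E pd n ι x = 0 := dif_neg h

lemma MF_ne (n : ℕ) (h : n ≠ 1) (ι : Fin n → ℤ) (x : ∀ j, E (ι j)) :
    MF 𝕜 E pd n ι x = 0 := dif_neg h

lemma NF_ne (n : ℕ) (h1 : n ≠ 1) (h2 : n ≠ 2) (ι : Fin n → ℤ) (x : ∀ j, E (ι j)) :
    NF 𝕜 E a n ι x = 0 := by
  rw [NF_apply, euler_ne E n h1, alF_ne 𝕜 E a n h2, add_zero]

lemma MF_m2 (ι : Fin 1 → ℤ) (h : ι 0 = -2) (x : ∀ j, E (ι j)) :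
    MF 𝕜 E pd 1 ι x = DirectSum.of E (-1) (pd (cast (congrArg E h) (x 0))) := by
  unfold MF delF
  rw [dif_pos rfl]
  rw [dif_pos (show ι ⟨0, by omega⟩ = -2 from h)]
  rfl

lemma MF_m1 (ι : Fin 1 → ℤ) (h : ι 0 = -1) (x : ∀ j, E (ι j)) :
    MF 𝕜 E pd 1 ι x = 0 := by
  unfold MF delF
  rw [dif_pos rfl, dif_neg (show ¬ ι ⟨0, by omega⟩ = -2 by rw [show (⟨0, by omega⟩ : Fin 1) = 0 from rfl, h]; decide)]

lemma NF_one (ι : Fin 1 → ℤ) (x : ∀ j, E (ι j)) :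
    NF 𝕜 E a 1 ι x = (-(ι 0)) • DirectSum.of E (ι 0) (x 0) := by
  rw [NF_apply, alF_ne 𝕜 E a 1 (by decide), add_zero]
  unfold euler
  rw [dif_pos rfl]
  rfl

lemma NF_two (ι : Fin 2 → ℤ) (h0 : ι 0 = -1) (h1 : ι 1 = -1) (x : ∀ j, E (ι j)) :
    NF 𝕜 E a 2 ι x =
      DirectSum.of E (-2) (a (cast (congrArg E h0) (x 0)) (cast (congrArg E h1) (x 1))) := by
  rw [NF_apply, euler_ne E 2 (by decide), zero_add]
  unfold alF
  rw [dif_pos rfl]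
  rw [dif_pos (show ι ⟨0, by omega⟩ = -1 from h0), dif_pos (show ι ⟨1, by omega⟩ = -1 from h1)]
  rfl

lemma NF_two_0 (ι : Fin 2 → ℤ) (h0 : ι 0 = -2) (x : ∀ j, E (ι j)) :
    NF 𝕜 E a 2 ι x = 0 := by
  rw [NF_apply, euler_ne E 2 (by decide), zero_add]
  unfold alF
  rw [dif_pos rfl, dif_neg (show ¬ ι ⟨0, by omega⟩ = -1 by
    rw [show (⟨0, by omega⟩ : Fin 2) = 0 from rfl, h0]; decide)]

lemma NF_two_1 (ι : Fin 2 → ℤ) (h1 : ι 1 = -2) (x : ∀ j, E (ι j)) :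
    NF 𝕜 E a 2 ι x = 0 := by
  rw [NF_apply, euler_ne E 2 (by decide), zero_add]
  unfold alF
  rw [dif_pos rfl]
  by_cases h0 : (fun j => ι j) ⟨0, by omega⟩ = -1
  · rw [dif_pos h0, dif_neg (show ¬ ι ⟨1, by omega⟩ = -1 by
      rw [show (⟨1, by omega⟩ : Fin 2) = 1 from rfl, h1]; decide)]
  · rw [dif_neg h0]

lemma of_single (i : ℤ) (v : E i) : DirectSum.of E i v = DFinsupp.single i v := rfl

lemma cast_zero {i j : ℤ} (h : i = j) : cast (congrArg E h) (0 : E i) = 0 := by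
  subst h; rfl

end Compute

section Compute2
set_option linter.unusedSectionVars false
variable (𝕜 : Type) [Field 𝕜] [CharZero 𝕜]
variable (E : ℤ → Type) [∀ i, AddCommGroup (E i)] [∀ i, Module 𝕜 (E i)]
variable (pd : E (-2) →ₗ[𝕜] E (-1)) (a : E (-1) →ₗ[𝕜] E (-1) →ₗ[𝕜] E (-2))

lemma form_congr (F : RawForm E) (n : ℕ) (ι ι' : Fin n → ℤ) (h : ι = ι')
    (x : ∀ j, E (ι j)) :
    F n ι x = F n ι' (fun j => cast (congrArg E (congrFun h j)) (x j)) := by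
  subst h; rfl

lemma koszul_one (n : ℕ) (ι : Fin n → ℤ) : koszulSign 𝕜 ι 1 = 1 := by
  unfold koszulSign
  rw [filter_univ_eq _ ∅ (by
    intro p
    simp only [Finset.notMem_empty, iff_false, Equiv.Perm.coe_one, id_eq]
    rintro ⟨h1, h2⟩
    exact lt_irrefl _ (h1.trans h2)), Finset.prod_empty]

lemma koszul_swap2 (ι : Fin 2 → ℤ) :
    koszulSign 𝕜 ι (Equiv.swap 0 1) = (-1 : 𝕜) ^ (ι 1 * ι 0) := by
  unfold koszulSign
  rw [filter_univ_eq _ {((0 : Fin 2), (1 : Fin 2))} (by decide), Finset.prod_singleton]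
  rfl

lemma koszul_swap01 (ι : Fin 3 → ℤ) :
    koszulSign 𝕜 ι (Equiv.swap 0 1) = (-1 : 𝕜) ^ (ι 1 * ι 0) := by
  unfold koszulSign
  rw [filter_univ_eq _ {((0 : Fin 3), (1 : Fin 3))} (by decide), Finset.prod_singleton]
  rfl

lemma koszul_swap12 (ι : Fin 3 → ℤ) :
    koszulSign 𝕜 ι (Equiv.swap 1 2) = (-1 : 𝕜) ^ (ι 2 * ι 1) := by
  unfold koszulSign
  rw [filter_univ_eq _ {((1 : Fin 3), (2 : Fin 3))} (by decide), Finset.prod_singleton]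
  rfl

/-- the cycle `0 ↦ 1 ↦ 2 ↦ 0`. -/
lemma koszul_cyc (ι : Fin 3 → ℤ) :
    koszulSign 𝕜 ι (Equiv.swap 0 1 * Equiv.swap 1 2) =
      (-1 : 𝕜) ^ (ι 1 * ι 0) * (-1 : 𝕜) ^ (ι 2 * ι 0) := by
  unfold koszulSign
  rw [filter_univ_eq _ {((0 : Fin 3), (2 : Fin 3)), ((1 : Fin 3), (2 : Fin 3))} (by decide),
    Finset.prod_insert (by decide), Finset.prod_singleton]
  rfl

/-- the cycle `0 ↦ 2 ↦ 1 ↦ 0`. -/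
lemma koszul_cyc' (ι : Fin 3 → ℤ) :
    koszulSign 𝕜 ι (Equiv.swap 1 2 * Equiv.swap 0 1) =
      (-1 : 𝕜) ^ (ι 2 * ι 0) * (-1 : 𝕜) ^ (ι 2 * ι 1) := by
  unfold koszulSign
  rw [filter_univ_eq _ {((0 : Fin 3), (1 : Fin 3)), ((0 : Fin 3), (2 : Fin 3))} (by decide),
    Finset.prod_insert (by decide), Finset.prod_singleton]
  rfl

end Compute2

section Compute3
set_option linter.unusedSectionVars false
variable (𝕜 : Type) [Field 𝕜] [CharZero 𝕜]
variable (E : ℤ → Type) [∀ i, AddCommGroup (E i)] [∀ i, Module 𝕜 (E i)]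
variable (pd : E (-2) →ₗ[𝕜] E (-1)) (a : E (-1) →ₗ[𝕜] E (-1) →ₗ[𝕜] E (-2))

/-- degree vector (p,q) -/
def dd (p q : ℤ) : Fin 2 → ℤ := dcons p (dcons q Fin.elim0)

lemma PF2_mm_c (y : ∀ j, E (dd (-1) (-1) j)) :
    PF 𝕜 E pd a 2 (dd (-1) (-1)) y = DirectSum.of E (-1) (pd (a (y 0) (y 1))) := by
  have MF2' : ∀ (ι : Fin 2 → ℤ) (x : ∀ j, E (ι j)), MF 𝕜 E pd 2 ι x = 0 :=
    MF_ne 𝕜 E pd 2 (by decide)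
  have e1 : ins 𝕜 E (NF 𝕜 E a) (MF 𝕜 E pd) 2 (dd (-1) (-1)) y =
      DirectSum.of E (-1) (pd (a (y 0) (y 1))) := by
    unfold ins
    rw [Fin.sum_univ_succ, Fin.sum_univ_succ, Fin.sum_univ_succ, Fin.sum_univ_zero]
    rw [filter_univ_eq _ {1} (by decide), filter_univ_eq _ {1, Equiv.swap 0 1} (by decide),
        filter_univ_eq _ {1} (by decide)]
    rw [Finset.sum_singleton, Finset.sum_insert (by decide), Finset.sum_singleton,
        Finset.sum_singleton]
    simp only [Fin.val_succ, Fin.val_zero, Nat.reduceAdd, Nat.reduceSub]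
    simp only [MF2', DFinsupp.sum_zero, smul_zero, add_zero, zero_add]
    rw [NF_ne 𝕜 E a 0 (by decide) (by decide), DFinsupp.sum_zero_index, smul_zero, zero_add]
    rw [NF_two 𝕜 E a _ rfl rfl]
    rw [koszul_one, one_smul]
    rw [of_single, DFinsupp.sum_single_index (by
      show DirectSum.of E (-1) (pd 0) = 0
      rw [map_zero, map_zero])]
    rw [MF_m2 𝕜 E pd _ rfl]
    rfl
  have e2 : ins 𝕜 E (MF 𝕜 E pd) (NF 𝕜 E a) 2 (dd (-1) (-1)) y = 0 := by
    unfold ins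
    rw [Fin.sum_univ_succ, Fin.sum_univ_succ, Fin.sum_univ_succ, Fin.sum_univ_zero]
    rw [filter_univ_eq _ {1} (by decide), filter_univ_eq _ {1, Equiv.swap 0 1} (by decide),
        filter_univ_eq _ {1} (by decide)]
    rw [Finset.sum_singleton, Finset.sum_insert (by decide), Finset.sum_singleton,
        Finset.sum_singleton]
    simp only [Fin.val_succ, Fin.val_zero, Nat.reduceAdd, Nat.reduceSub]
    rw [MF_ne 𝕜 E pd 0 (by decide), DFinsupp.sum_zero_index, smul_zero, zero_add]
    rw [MF_m1 𝕜 E pd _ rfl, MF_m1 𝕜 E pd _ rfl, MF2' _,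
        DFinsupp.sum_zero_index, DFinsupp.sum_zero_index, DFinsupp.sum_zero_index]
    simp only [smul_zero, add_zero, zero_add]
  show ins 𝕜 E (NF 𝕜 E a) (MF 𝕜 E pd) 2 (dd (-1) (-1)) y -
      ((-1 : 𝕜) ^ ((0:ℤ) * 1)) • ins 𝕜 E (MF 𝕜 E pd) (NF 𝕜 E a) 2 (dd (-1) (-1)) y = _
  rw [e1, e2, smul_zero, sub_zero]
end Compute3

section Compute4
set_option linter.unusedSectionVars false
variable (𝕜 : Type) [Field 𝕜] [CharZero 𝕜]
variable (E : ℤ → Type) [∀ i, AddCommGroup (E i)] [∀ i, Module 𝕜 (E i)]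
variable (pd : E (-2) →ₗ[𝕜] E (-1)) (a : E (-1) →ₗ[𝕜] E (-1) →ₗ[𝕜] E (-2))

lemma PF2_m12_c (y : ∀ j, E (dd (-1) (-2) j)) :
    PF 𝕜 E pd a 2 (dd (-1) (-2)) y = - DirectSum.of E (-2) (a (pd (y 1)) (y 0)) := by
  have MF2' : ∀ (ι : Fin 2 → ℤ) (x : ∀ j, E (ι j)), MF 𝕜 E pd 2 ι x = 0 :=
    MF_ne 𝕜 E pd 2 (by decide)
  have e1 : ins 𝕜 E (NF 𝕜 E a) (MF 𝕜 E pd) 2 (dd (-1) (-2)) y = 0 := by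
    unfold ins
    rw [Fin.sum_univ_succ, Fin.sum_univ_succ, Fin.sum_univ_succ, Fin.sum_univ_zero]
    rw [filter_univ_eq _ {1} (by decide), filter_univ_eq _ {1, Equiv.swap 0 1} (by decide),
        filter_univ_eq _ {1} (by decide)]
    rw [Finset.sum_singleton, Finset.sum_insert (by decide), Finset.sum_singleton,
        Finset.sum_singleton]
    simp only [Fin.val_succ, Fin.val_zero, Nat.reduceAdd, Nat.reduceSub]
    simp only [MF2', DFinsupp.sum_zero, smul_zero, add_zero, zero_add]
    rw [NF_ne 𝕜 E a 0 (by decide) (by decide), DFinsupp.sum_zero_index, smul_zero, zero_add]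
    rw [NF_two_1 𝕜 E a _ rfl, DFinsupp.sum_zero_index, smul_zero]
  have e2 : ins 𝕜 E (MF 𝕜 E pd) (NF 𝕜 E a) 2 (dd (-1) (-2)) y =
      DirectSum.of E (-2) (a (pd (y 1)) (y 0)) := by
    unfold ins
    rw [Fin.sum_univ_succ, Fin.sum_univ_succ, Fin.sum_univ_succ, Fin.sum_univ_zero]
    rw [filter_univ_eq _ {1} (by decide), filter_univ_eq _ {1, Equiv.swap 0 1} (by decide),
        filter_univ_eq _ {1} (by decide)]
    rw [Finset.sum_singleton, Finset.sum_insert (by decide), Finset.sum_singleton,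
        Finset.sum_singleton]
    simp only [Fin.val_succ, Fin.val_zero, Nat.reduceAdd, Nat.reduceSub]
    rw [MF_ne 𝕜 E pd 0 (by decide), DFinsupp.sum_zero_index, smul_zero, zero_add]
    rw [MF2' _, DFinsupp.sum_zero_index, smul_zero, add_zero]
    rw [MF_m1 𝕜 E pd _ rfl, DFinsupp.sum_zero_index, smul_zero, zero_add]
    rw [MF_m2 𝕜 E pd _ rfl]
    rw [of_single, DFinsupp.sum_single_index (by
      rw [NF_two 𝕜 E a _ rfl rfl]
      show DirectSum.of E (-2) (a 0 _) = 0
      rw [map_zero a, LinearMap.zero_apply, map_zero])]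
    rw [NF_two 𝕜 E a _ rfl rfl]
    rw [koszul_swap2, show dd (-1) (-2) 1 * dd (-1) (-2) 0 = 2 from rfl,
        show ((-1 : 𝕜) ^ (2 : ℤ)) = 1 by norm_num, one_smul, add_zero]
    rfl
  show ins 𝕜 E (NF 𝕜 E a) (MF 𝕜 E pd) 2 (dd (-1) (-2)) y -
      ((-1 : 𝕜) ^ ((0:ℤ) * 1)) • ins 𝕜 E (MF 𝕜 E pd) (NF 𝕜 E a) 2 (dd (-1) (-2)) y = _
  rw [e1, e2, show ((-1 : 𝕜) ^ ((0:ℤ) * 1)) = 1 by norm_num, one_smul, zero_sub]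

lemma PF2_m21_c (y : ∀ j, E (dd (-2) (-1) j)) :
    PF 𝕜 E pd a 2 (dd (-2) (-1)) y = - DirectSum.of E (-2) (a (pd (y 0)) (y 1)) := by
  have MF2' : ∀ (ι : Fin 2 → ℤ) (x : ∀ j, E (ι j)), MF 𝕜 E pd 2 ι x = 0 :=
    MF_ne 𝕜 E pd 2 (by decide)
  have e1 : ins 𝕜 E (NF 𝕜 E a) (MF 𝕜 E pd) 2 (dd (-2) (-1)) y = 0 := by
    unfold ins
    rw [Fin.sum_univ_succ, Fin.sum_univ_succ, Fin.sum_univ_succ, Fin.sum_univ_zero]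
    rw [filter_univ_eq _ {1} (by decide), filter_univ_eq _ {1, Equiv.swap 0 1} (by decide),
        filter_univ_eq _ {1} (by decide)]
    rw [Finset.sum_singleton, Finset.sum_insert (by decide), Finset.sum_singleton,
        Finset.sum_singleton]
    simp only [Fin.val_succ, Fin.val_zero, Nat.reduceAdd, Nat.reduceSub]
    simp only [MF2', DFinsupp.sum_zero, smul_zero, add_zero, zero_add]
    rw [NF_ne 𝕜 E a 0 (by decide) (by decide), DFinsupp.sum_zero_index, smul_zero, zero_add]
    rw [NF_two_0 𝕜 E a _ rfl, DFinsupp.sum_zero_index, smul_zero]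
  have e2 : ins 𝕜 E (MF 𝕜 E pd) (NF 𝕜 E a) 2 (dd (-2) (-1)) y =
      DirectSum.of E (-2) (a (pd (y 0)) (y 1)) := by
    unfold ins
    rw [Fin.sum_univ_succ, Fin.sum_univ_succ, Fin.sum_univ_succ, Fin.sum_univ_zero]
    rw [filter_univ_eq _ {1} (by decide), filter_univ_eq _ {1, Equiv.swap 0 1} (by decide),
        filter_univ_eq _ {1} (by decide)]
    rw [Finset.sum_singleton, Finset.sum_insert (by decide), Finset.sum_singleton,
        Finset.sum_singleton]
    simp only [Fin.val_succ, Fin.val_zero, Nat.reduceAdd, Nat.reduceSub]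
    rw [MF_ne 𝕜 E pd 0 (by decide), DFinsupp.sum_zero_index, smul_zero, zero_add]
    rw [MF2' _, DFinsupp.sum_zero_index, smul_zero, add_zero]
    rw [MF_m2 𝕜 E pd _ rfl]
    rw [of_single, DFinsupp.sum_single_index (by
      rw [NF_two 𝕜 E a _ rfl rfl]
      show DirectSum.of E (-2) (a 0 _) = 0
      rw [map_zero a, LinearMap.zero_apply, map_zero])]
    rw [NF_two 𝕜 E a _ rfl rfl]
    rw [koszul_one, one_smul]
    rw [MF_m1 𝕜 E pd _ rfl, DFinsupp.sum_zero_index, smul_zero, add_zero, add_zero]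
    rfl
  show ins 𝕜 E (NF 𝕜 E a) (MF 𝕜 E pd) 2 (dd (-2) (-1)) y -
      ((-1 : 𝕜) ^ ((0:ℤ) * 1)) • ins 𝕜 E (MF 𝕜 E pd) (NF 𝕜 E a) 2 (dd (-2) (-1)) y = _
  rw [e1, e2, show ((-1 : 𝕜) ^ ((0:ℤ) * 1)) = 1 by norm_num, one_smul, zero_sub]

lemma PF2_m22_c (y : ∀ j, E (dd (-2) (-2) j)) :
    PF 𝕜 E pd a 2 (dd (-2) (-2)) y = 0 := by
  have MF2' : ∀ (ι : Fin 2 → ℤ) (x : ∀ j, E (ι j)), MF 𝕜 E pd 2 ι x = 0 :=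
    MF_ne 𝕜 E pd 2 (by decide)
  have e1 : ins 𝕜 E (NF 𝕜 E a) (MF 𝕜 E pd) 2 (dd (-2) (-2)) y = 0 := by
    unfold ins
    rw [Fin.sum_univ_succ, Fin.sum_univ_succ, Fin.sum_univ_succ, Fin.sum_univ_zero]
    rw [filter_univ_eq _ {1} (by decide), filter_univ_eq _ {1, Equiv.swap 0 1} (by decide),
        filter_univ_eq _ {1} (by decide)]
    rw [Finset.sum_singleton, Finset.sum_insert (by decide), Finset.sum_singleton,
        Finset.sum_singleton]
    simp only [Fin.val_succ, Fin.val_zero, Nat.reduceAdd, Nat.reduceSub]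
    simp only [MF2', DFinsupp.sum_zero, smul_zero, add_zero, zero_add]
    rw [NF_ne 𝕜 E a 0 (by decide) (by decide), DFinsupp.sum_zero_index, smul_zero, zero_add]
    rw [NF_two_0 𝕜 E a _ rfl, DFinsupp.sum_zero_index, smul_zero]
  have e2 : ins 𝕜 E (MF 𝕜 E pd) (NF 𝕜 E a) 2 (dd (-2) (-2)) y = 0 := by
    unfold ins
    rw [Fin.sum_univ_succ, Fin.sum_univ_succ, Fin.sum_univ_succ, Fin.sum_univ_zero]
    rw [filter_univ_eq _ {1} (by decide), filter_univ_eq _ {1, Equiv.swap 0 1} (by decide),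
        filter_univ_eq _ {1} (by decide)]
    rw [Finset.sum_singleton, Finset.sum_insert (by decide), Finset.sum_singleton,
        Finset.sum_singleton]
    simp only [Fin.val_succ, Fin.val_zero, Nat.reduceAdd, Nat.reduceSub]
    rw [MF_ne 𝕜 E pd 0 (by decide), DFinsupp.sum_zero_index, smul_zero, zero_add]
    rw [MF2' _, DFinsupp.sum_zero_index, smul_zero, add_zero]
    rw [MF_m2 𝕜 E pd _ rfl, MF_m2 𝕜 E pd _ rfl]
    rw [of_single, DFinsupp.sum_single_index (by
      rw [NF_two_1 𝕜 E a _ rfl]), of_single, DFinsupp.sum_single_index (by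
      rw [NF_two_1 𝕜 E a _ rfl])]
    rw [NF_two_1 𝕜 E a _ rfl, NF_two_1 𝕜 E a _ rfl]
    simp
  show ins 𝕜 E (NF 𝕜 E a) (MF 𝕜 E pd) 2 (dd (-2) (-2)) y -
      ((-1 : 𝕜) ^ ((0:ℤ) * 1)) • ins 𝕜 E (MF 𝕜 E pd) (NF 𝕜 E a) 2 (dd (-2) (-2)) y = _
  rw [e1, e2, smul_zero, sub_zero]

end Compute4

section Compute5
set_option linter.unusedSectionVars false
variable (𝕜 : Type) [Field 𝕜] [CharZero 𝕜]
variable (E : ℤ → Type) [∀ i, AddCommGroup (E i)] [∀ i, Module 𝕜 (E i)]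
variable (pd : E (-2) →ₗ[𝕜] E (-1)) (a : E (-1) →ₗ[𝕜] E (-1) →ₗ[𝕜] E (-2))

lemma PF0 (ι : Fin 0 → ℤ) (x : ∀ j, E (ι j)) : PF 𝕜 E pd a 0 ι x = 0 := by
  show ins 𝕜 E (NF 𝕜 E a) (MF 𝕜 E pd) 0 ι x -
      ((-1 : 𝕜) ^ ((0:ℤ) * 1)) • ins 𝕜 E (MF 𝕜 E pd) (NF 𝕜 E a) 0 ι x = 0
  unfold ins
  rw [Fin.sum_univ_succ, Fin.sum_univ_zero, Fin.sum_univ_succ, Fin.sum_univ_zero]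
  simp only [Fin.val_zero]
  have NF0' : ∀ (ι : Fin 0 → ℤ) (x : ∀ j, E (ι j)), NF 𝕜 E a 0 ι x = 0 :=
    NF_ne 𝕜 E a 0 (by decide) (by decide)
  have MF0' : ∀ (ι : Fin 0 → ℤ) (x : ∀ j, E (ι j)), MF 𝕜 E pd 0 ι x = 0 :=
    MF_ne 𝕜 E pd 0 (by decide)
  simp only [NF0', MF0', DFinsupp.sum_zero_index, smul_zero, add_zero,
    Finset.sum_const_zero, zero_add]
  simp

lemma PF3 (ι : Fin 3 → ℤ) (x : ∀ j, E (ι j)) : PF 𝕜 E pd a 3 ι x = 0 := by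
  have MF2' : ∀ (ι : Fin 2 → ℤ) (x : ∀ j, E (ι j)), MF 𝕜 E pd 2 ι x = 0 :=
    MF_ne 𝕜 E pd 2 (by decide)
  have MF3' : ∀ (ι : Fin 3 → ℤ) (x : ∀ j, E (ι j)), MF 𝕜 E pd 3 ι x = 0 :=
    MF_ne 𝕜 E pd 3 (by decide)
  have NF3' : ∀ (ι : Fin 3 → ℤ) (x : ∀ j, E (ι j)), NF 𝕜 E a 3 ι x = 0 :=
    NF_ne 𝕜 E a 3 (by decide) (by decide)
  show ins 𝕜 E (NF 𝕜 E a) (MF 𝕜 E pd) 3 ι x -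
      ((-1 : 𝕜) ^ ((0:ℤ) * 1)) • ins 𝕜 E (MF 𝕜 E pd) (NF 𝕜 E a) 3 ι x = 0
  unfold ins
  rw [Fin.sum_univ_succ, Fin.sum_univ_succ, Fin.sum_univ_succ, Fin.sum_univ_succ,
    Fin.sum_univ_zero, Fin.sum_univ_succ, Fin.sum_univ_succ, Fin.sum_univ_succ,
    Fin.sum_univ_succ, Fin.sum_univ_zero]
  simp only [Fin.val_succ, Fin.val_zero, Nat.reduceAdd, Nat.reduceSub]
  have NF0' : ∀ (ι : Fin 0 → ℤ) (x : ∀ j, E (ι j)), NF 𝕜 E a 0 ι x = 0 :=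
    NF_ne 𝕜 E a 0 (by decide) (by decide)
  have MF0' : ∀ (ι : Fin 0 → ℤ) (x : ∀ j, E (ι j)), MF 𝕜 E pd 0 ι x = 0 :=
    MF_ne 𝕜 E pd 0 (by decide)
  simp only [NF0', MF0', MF2', MF3', NF3', DFinsupp.sum_zero, DFinsupp.sum_zero_index,
    smul_zero, add_zero, zero_add, Finset.sum_const_zero]
  simp

lemma QF0 (ι : Fin 0 → ℤ) (x : ∀ j, E (ι j)) : QF 𝕜 E pd a 0 ι x = 0 := by
  show ins 𝕜 E (NF 𝕜 E a) (PF 𝕜 E pd a) 0 ι x -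
      ((-1 : 𝕜) ^ ((0:ℤ) * 1)) • ins 𝕜 E (PF 𝕜 E pd a) (NF 𝕜 E a) 0 ι x = 0
  unfold ins
  rw [Fin.sum_univ_succ, Fin.sum_univ_zero, Fin.sum_univ_succ, Fin.sum_univ_zero]
  simp only [Fin.val_zero]
  have NF0' : ∀ (ι : Fin 0 → ℤ) (x : ∀ j, E (ι j)), NF 𝕜 E a 0 ι x = 0 :=
    NF_ne 𝕜 E a 0 (by decide) (by decide)
  simp only [NF0', PF0 𝕜 E pd a, DFinsupp.sum_zero_index, smul_zero, add_zero,
    Finset.sum_const_zero, zero_add]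
  simp

lemma PF2_mm (ι : Fin 2 → ℤ) (h0 : ι 0 = -1) (h1 : ι 1 = -1) (x : ∀ j, E (ι j)) :
    PF 𝕜 E pd a 2 ι x =
      DirectSum.of E (-1) (pd (a (cast (congrArg E h0) (x 0)) (cast (congrArg E h1) (x 1)))) := by
  rw [form_congr E (PF 𝕜 E pd a) 2 ι (dd (-1) (-1))
    (by funext j; fin_cases j <;> first | exact h0 | exact h1) x]
  exact PF2_mm_c 𝕜 E pd a _

lemma PF2_m12 (ι : Fin 2 → ℤ) (h0 : ι 0 = -1) (h1 : ι 1 = -2) (x : ∀ j, E (ι j)) :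
    PF 𝕜 E pd a 2 ι x =
      - DirectSum.of E (-2) (a (pd (cast (congrArg E h1) (x 1))) (cast (congrArg E h0) (x 0))) := by
  rw [form_congr E (PF 𝕜 E pd a) 2 ι (dd (-1) (-2))
    (by funext j; fin_cases j <;> first | exact h0 | exact h1) x]
  exact PF2_m12_c 𝕜 E pd a _

lemma PF2_m21 (ι : Fin 2 → ℤ) (h0 : ι 0 = -2) (h1 : ι 1 = -1) (x : ∀ j, E (ι j)) :
    PF 𝕜 E pd a 2 ι x =
      - DirectSum.of E (-2) (a (pd (cast (congrArg E h0) (x 0))) (cast (congrArg E h1) (x 1))) := by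
  rw [form_congr E (PF 𝕜 E pd a) 2 ι (dd (-2) (-1))
    (by funext j; fin_cases j <;> first | exact h0 | exact h1) x]
  exact PF2_m21_c 𝕜 E pd a _

lemma PF2_m22 (ι : Fin 2 → ℤ) (h0 : ι 0 = -2) (h1 : ι 1 = -2) (x : ∀ j, E (ι j)) :
    PF 𝕜 E pd a 2 ι x = 0 := by
  rw [form_congr E (PF 𝕜 E pd a) 2 ι (dd (-2) (-2))
    (by funext j; fin_cases j <;> first | exact h0 | exact h1) x]
  exact PF2_m22_c 𝕜 E pd a _

end Compute5

section Compute6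
set_option linter.unusedSectionVars false
variable (𝕜 : Type) [Field 𝕜] [CharZero 𝕜]
variable (E : ℤ → Type) [∀ i, AddCommGroup (E i)] [∀ i, Module 𝕜 (E i)]
variable (pd : E (-2) →ₗ[𝕜] E (-1)) (a : E (-1) →ₗ[𝕜] E (-1) →ₗ[𝕜] E (-2))

/-- degree vector (p,q,r) -/
def ddd (p q r : ℤ) : Fin 3 → ℤ := dcons p (dcons q (dcons r Fin.elim0))

lemma dconsV_zero {n : ℕ} {m : ℤ} {rest : Fin n → ℤ} (v : E m) (xs : ∀ i, E (rest i)) :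
    dconsV E v xs 0 = v := rfl

lemma QF3_mmm_c (y : ∀ j, E (ddd (-1) (-1) (-1) j)) :
    QF 𝕜 E pd a 3 (ddd (-1) (-1) (-1)) y =
      DirectSum.of E (-2) ((-2 : ℤ) •
        (a (pd (a (y 0) (y 1))) (y 2) - a (pd (a (y 0) (y 2))) (y 1)
          + a (pd (a (y 1) (y 2))) (y 0))) := by
  have NF0' : ∀ (ι : Fin 0 → ℤ) (x : ∀ j, E (ι j)), NF 𝕜 E a 0 ι x = 0 :=
    NF_ne 𝕜 E a 0 (by decide) (by decide)
  have NF3' : ∀ (ι : Fin 3 → ℤ) (x : ∀ j, E (ι j)), NF 𝕜 E a 3 ι x = 0 :=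
    NF_ne 𝕜 E a 3 (by decide) (by decide)
  have e1 : ins 𝕜 E (NF 𝕜 E a) (PF 𝕜 E pd a) 3 (ddd (-1) (-1) (-1)) y =
      - DirectSum.of E (-2) (a (pd (a (y 0) (y 1))) (y 2))
        + (DirectSum.of E (-2) (a (pd (a (y 0) (y 2))) (y 1))
          + - DirectSum.of E (-2) (a (pd (a (y 1) (y 2))) (y 0))) := by
    unfold ins
    rw [Fin.sum_univ_succ, Fin.sum_univ_succ, Fin.sum_univ_succ, Fin.sum_univ_succ,
        Fin.sum_univ_zero]
    rw [filter_univ_eq _ {1} (by decide),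
        filter_univ_eq _ {1, Equiv.swap 0 1, Equiv.swap 1 2 * Equiv.swap 0 1} (by decide),
        filter_univ_eq _ {1, Equiv.swap 1 2, Equiv.swap 0 1 * Equiv.swap 1 2} (by decide),
        filter_univ_eq _ {1} (by decide)]
    rw [Finset.sum_singleton, Finset.sum_insert (by decide), Finset.sum_insert (by decide),
        Finset.sum_singleton, Finset.sum_insert (by decide), Finset.sum_insert (by decide),
        Finset.sum_singleton, Finset.sum_singleton]
    simp only [Fin.val_succ, Fin.val_zero, Nat.reduceAdd, Nat.reduceSub]
    simp only [NF0', NF3', PF3 𝕜 E pd a, DFinsupp.sum_zero, DFinsupp.sum_zero_index,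
      smul_zero, add_zero, zero_add]
    rw [NF_two 𝕜 E a _ rfl rfl, NF_two 𝕜 E a _ rfl rfl, NF_two 𝕜 E a _ rfl rfl]
    rw [of_single, DFinsupp.sum_single_index (by
        rw [PF2_m21 𝕜 E pd a _ rfl rfl]
        change -(DirectSum.of E (-2) (a (pd 0) _)) = 0
        rw [map_zero pd, map_zero a, LinearMap.zero_apply, map_zero, neg_zero])]
    rw [of_single, DFinsupp.sum_single_index (by
        rw [PF2_m21 𝕜 E pd a _ rfl rfl]
        change -(DirectSum.of E (-2) (a (pd 0) _)) = 0
        rw [map_zero pd, map_zero a, LinearMap.zero_apply, map_zero, neg_zero])]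
    rw [of_single, DFinsupp.sum_single_index (by
        rw [PF2_m21 𝕜 E pd a _ rfl rfl]
        change -(DirectSum.of E (-2) (a (pd 0) _)) = 0
        rw [map_zero pd, map_zero a, LinearMap.zero_apply, map_zero, neg_zero])]
    rw [PF2_m21 𝕜 E pd a _ rfl rfl, PF2_m21 𝕜 E pd a _ rfl rfl, PF2_m21 𝕜 E pd a _ rfl rfl]
    rw [koszul_one, one_smul, koszul_swap12, koszul_cyc]
    rw [show ddd (-1) (-1) (-1) 2 * ddd (-1) (-1) (-1) 1 = 1 from rfl,
        show ddd (-1) (-1) (-1) 1 * ddd (-1) (-1) (-1) 0 = 1 from rfl,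
        show ddd (-1) (-1) (-1) 2 * ddd (-1) (-1) (-1) 0 = 1 from rfl,
        show ((-1 : 𝕜) ^ (1 : ℤ)) = -1 by norm_num]
    rw [show ((-1 : 𝕜) * -1) = 1 by norm_num, one_smul, neg_smul, one_smul, neg_neg]
    rfl
  have e2 : ins 𝕜 E (PF 𝕜 E pd a) (NF 𝕜 E a) 3 (ddd (-1) (-1) (-1)) y =
      DirectSum.of E (-2) (a (pd (a (y 0) (y 1))) (y 2))
        + (- DirectSum.of E (-2) (a (pd (a (y 0) (y 2))) (y 1))
          + DirectSum.of E (-2) (a (pd (a (y 1) (y 2))) (y 0))) := by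
    unfold ins
    rw [Fin.sum_univ_succ, Fin.sum_univ_succ, Fin.sum_univ_succ, Fin.sum_univ_succ,
        Fin.sum_univ_zero]
    rw [filter_univ_eq _ {1} (by decide),
        filter_univ_eq _ {1, Equiv.swap 0 1, Equiv.swap 1 2 * Equiv.swap 0 1} (by decide),
        filter_univ_eq _ {1, Equiv.swap 1 2, Equiv.swap 0 1 * Equiv.swap 1 2} (by decide),
        filter_univ_eq _ {1} (by decide)]
    rw [Finset.sum_singleton, Finset.sum_insert (by decide), Finset.sum_insert (by decide),
        Finset.sum_singleton, Finset.sum_insert (by decide), Finset.sum_insert (by decide),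
        Finset.sum_singleton, Finset.sum_singleton]
    simp only [Fin.val_succ, Fin.val_zero, Nat.reduceAdd, Nat.reduceSub]
    simp only [PF0 𝕜 E pd a, PF3 𝕜 E pd a, NF3', DFinsupp.sum_zero, DFinsupp.sum_zero_index,
      smul_zero, add_zero, zero_add]
    rw [PF2_mm 𝕜 E pd a _ rfl rfl, PF2_mm 𝕜 E pd a _ rfl rfl, PF2_mm 𝕜 E pd a _ rfl rfl]
    rw [of_single, DFinsupp.sum_single_index (by
        rw [NF_two 𝕜 E a _ rfl rfl]
        change DirectSum.of E (-2) (a 0 _) = 0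
        rw [map_zero a, LinearMap.zero_apply, map_zero])]
    rw [of_single, DFinsupp.sum_single_index (by
        rw [NF_two 𝕜 E a _ rfl rfl]
        change DirectSum.of E (-2) (a 0 _) = 0
        rw [map_zero a, LinearMap.zero_apply, map_zero])]
    rw [of_single, DFinsupp.sum_single_index (by
        rw [NF_two 𝕜 E a _ rfl rfl]
        change DirectSum.of E (-2) (a 0 _) = 0
        rw [map_zero a, LinearMap.zero_apply, map_zero])]
    rw [NF_two 𝕜 E a _ rfl rfl, NF_two 𝕜 E a _ rfl rfl, NF_two 𝕜 E a _ rfl rfl]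
    rw [koszul_one, one_smul, koszul_swap12, koszul_cyc]
    rw [show ddd (-1) (-1) (-1) 2 * ddd (-1) (-1) (-1) 1 = 1 from rfl,
        show ddd (-1) (-1) (-1) 1 * ddd (-1) (-1) (-1) 0 = 1 from rfl,
        show ddd (-1) (-1) (-1) 2 * ddd (-1) (-1) (-1) 0 = 1 from rfl,
        show ((-1 : 𝕜) ^ (1 : ℤ)) = -1 by norm_num]
    rw [show ((-1 : 𝕜) * -1) = 1 by norm_num, one_smul, neg_smul, one_smul]
    rfl
  show ins 𝕜 E (NF 𝕜 E a) (PF 𝕜 E pd a) 3 (ddd (-1) (-1) (-1)) y -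
      ((-1 : 𝕜) ^ ((0:ℤ) * 1)) • ins 𝕜 E (PF 𝕜 E pd a) (NF 𝕜 E a) 3 (ddd (-1) (-1) (-1)) y = _
  rw [e1, e2, show ((-1 : 𝕜) ^ ((0:ℤ) * 1)) = 1 by norm_num, one_smul]
  simp only [of_single, DFinsupp.single_smul, DFinsupp.single_sub, DFinsupp.single_add]
  abel
end Compute6

section Compute7
set_option linter.unusedSectionVars false
variable (𝕜 : Type) [Field 𝕜] [CharZero 𝕜]
variable (E : ℤ → Type) [∀ i, AddCommGroup (E i)] [∀ i, Module 𝕜 (E i)]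
variable (pd : E (-2) →ₗ[𝕜] E (-1)) (a : E (-1) →ₗ[𝕜] E (-1) →ₗ[𝕜] E (-2))

lemma QF3_mm2_c (y : ∀ j, E (ddd (-1) (-1) (-2) j)) :
    QF 𝕜 E pd a 3 (ddd (-1) (-1) (-2)) y = 0 := by
  have NF0' : ∀ (ι : Fin 0 → ℤ) (x : ∀ j, E (ι j)), NF 𝕜 E a 0 ι x = 0 :=
    NF_ne 𝕜 E a 0 (by decide) (by decide)
  have NF3' : ∀ (ι : Fin 3 → ℤ) (x : ∀ j, E (ι j)), NF 𝕜 E a 3 ι x = 0 :=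
    NF_ne 𝕜 E a 3 (by decide) (by decide)
  have e1 : ins 𝕜 E (NF 𝕜 E a) (PF 𝕜 E pd a) 3 (ddd (-1) (-1) (-2)) y = 0 := by
    unfold ins
    rw [Fin.sum_univ_succ, Fin.sum_univ_succ, Fin.sum_univ_succ, Fin.sum_univ_succ,
        Fin.sum_univ_zero]
    rw [filter_univ_eq _ {1} (by decide),
        filter_univ_eq _ {1, Equiv.swap 0 1, Equiv.swap 1 2 * Equiv.swap 0 1} (by decide),
        filter_univ_eq _ {1, Equiv.swap 1 2, Equiv.swap 0 1 * Equiv.swap 1 2} (by decide),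
        filter_univ_eq _ {1} (by decide)]
    rw [Finset.sum_singleton, Finset.sum_insert (by decide), Finset.sum_insert (by decide),
        Finset.sum_singleton, Finset.sum_insert (by decide), Finset.sum_insert (by decide),
        Finset.sum_singleton, Finset.sum_singleton]
    simp only [Fin.val_succ, Fin.val_zero, Nat.reduceAdd, Nat.reduceSub]
    simp only [NF0', NF3', PF3 𝕜 E pd a, DFinsupp.sum_zero, DFinsupp.sum_zero_index,
      smul_zero, add_zero, zero_add]
    rw [NF_two 𝕜 E a _ rfl rfl]
    rw [of_single, DFinsupp.sum_single_index (by rw [PF2_m22 𝕜 E pd a _ rfl rfl])]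
    rw [PF2_m22 𝕜 E pd a _ rfl rfl]
    rw [NF_two_1 𝕜 E a _ rfl, NF_two_1 𝕜 E a _ rfl]
    simp only [DFinsupp.sum_zero_index, smul_zero, add_zero, zero_add]
  have e2 : ins 𝕜 E (PF 𝕜 E pd a) (NF 𝕜 E a) 3 (ddd (-1) (-1) (-2)) y = 0 := by
    unfold ins
    rw [Fin.sum_univ_succ, Fin.sum_univ_succ, Fin.sum_univ_succ, Fin.sum_univ_succ,
        Fin.sum_univ_zero]
    rw [filter_univ_eq _ {1} (by decide),
        filter_univ_eq _ {1, Equiv.swap 0 1, Equiv.swap 1 2 * Equiv.swap 0 1} (by decide),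
        filter_univ_eq _ {1, Equiv.swap 1 2, Equiv.swap 0 1 * Equiv.swap 1 2} (by decide),
        filter_univ_eq _ {1} (by decide)]
    rw [Finset.sum_singleton, Finset.sum_insert (by decide), Finset.sum_insert (by decide),
        Finset.sum_singleton, Finset.sum_insert (by decide), Finset.sum_insert (by decide),
        Finset.sum_singleton, Finset.sum_singleton]
    simp only [Fin.val_succ, Fin.val_zero, Nat.reduceAdd, Nat.reduceSub]
    simp only [PF0 𝕜 E pd a, PF3 𝕜 E pd a, NF3', DFinsupp.sum_zero, DFinsupp.sum_zero_index,
      smul_zero, add_zero, zero_add]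
    rw [PF2_mm 𝕜 E pd a _ rfl rfl, PF2_m12 𝕜 E pd a _ rfl rfl, PF2_m12 𝕜 E pd a _ rfl rfl]
    rw [of_single, DFinsupp.sum_single_index (by rw [NF_two_1 𝕜 E a _ rfl])]
    rw [of_single, ← DFinsupp.single_neg,
        DFinsupp.sum_single_index (by rw [NF_two_0 𝕜 E a _ rfl])]
    rw [of_single, ← DFinsupp.single_neg,
        DFinsupp.sum_single_index (by rw [NF_two_0 𝕜 E a _ rfl])]
    rw [NF_two_1 𝕜 E a _ rfl, NF_two_0 𝕜 E a _ rfl, NF_two_0 𝕜 E a _ rfl]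
    simp only [smul_zero, add_zero, zero_add]
  show ins 𝕜 E (NF 𝕜 E a) (PF 𝕜 E pd a) 3 (ddd (-1) (-1) (-2)) y -
      ((-1 : 𝕜) ^ ((0:ℤ) * 1)) • ins 𝕜 E (PF 𝕜 E pd a) (NF 𝕜 E a) 3 (ddd (-1) (-1) (-2)) y = _
  rw [e1, e2, smul_zero, sub_zero]

lemma QF3_mmm (ι : Fin 3 → ℤ) (h0 : ι 0 = -1) (h1 : ι 1 = -1) (h2 : ι 2 = -1)
    (x : ∀ j, E (ι j)) :
    QF 𝕜 E pd a 3 ι x =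
      DirectSum.of E (-2) ((-2 : ℤ) •
        (a (pd (a (cast (congrArg E h0) (x 0)) (cast (congrArg E h1) (x 1))))
            (cast (congrArg E h2) (x 2))
          - a (pd (a (cast (congrArg E h0) (x 0)) (cast (congrArg E h2) (x 2))))
            (cast (congrArg E h1) (x 1))
          + a (pd (a (cast (congrArg E h1) (x 1)) (cast (congrArg E h2) (x 2))))
            (cast (congrArg E h0) (x 0)))) := by
  rw [form_congr E (QF 𝕜 E pd a) 3 ι (ddd (-1) (-1) (-1))
    (by funext j; fin_cases j <;> first | exact h0 | exact h1 | exact h2) x]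
  exact QF3_mmm_c 𝕜 E pd a _

lemma QF3_mm2 (ι : Fin 3 → ℤ) (h0 : ι 0 = -1) (h1 : ι 1 = -1) (h2 : ι 2 = -2)
    (x : ∀ j, E (ι j)) : QF 𝕜 E pd a 3 ι x = 0 := by
  rw [form_congr E (QF 𝕜 E pd a) 3 ι (ddd (-1) (-1) (-2))
    (by funext j; fin_cases j <;> first | exact h0 | exact h1 | exact h2) x]
  exact QF3_mm2_c 𝕜 E pd a _

end Compute7

section Compute8
set_option linter.unusedSectionVars false
variable (𝕜 : Type) [Field 𝕜] [CharZero 𝕜]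
variable (E : ℤ → Type) [∀ i, AddCommGroup (E i)] [∀ i, Module 𝕜 (E i)]
variable (pd : E (-2) →ₗ[𝕜] E (-1)) (a : E (-1) →ₗ[𝕜] E (-1) →ₗ[𝕜] E (-2))

/-- `R = [μ, Q] = [μ,[N,[N,μ]]]`. -/
def RF : RawForm E := rnb 𝕜 E 1 1 (MF 𝕜 E pd) (QF 𝕜 E pd a)

lemma RF3_mmm_c (y : ∀ j, E (ddd (-1) (-1) (-1) j)) :
    RF 𝕜 E pd a 3 (ddd (-1) (-1) (-1)) y =
      DirectSum.of E (-1) (pd ((-2 : ℤ) •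
        (a (pd (a (y 0) (y 1))) (y 2) - a (pd (a (y 0) (y 2))) (y 1)
          + a (pd (a (y 1) (y 2))) (y 0)))) := by
  have MF0' : ∀ (ι : Fin 0 → ℤ) (x : ∀ j, E (ι j)), MF 𝕜 E pd 0 ι x = 0 :=
    MF_ne 𝕜 E pd 0 (by decide)
  have MF2' : ∀ (ι : Fin 2 → ℤ) (x : ∀ j, E (ι j)), MF 𝕜 E pd 2 ι x = 0 :=
    MF_ne 𝕜 E pd 2 (by decide)
  have MF3' : ∀ (ι : Fin 3 → ℤ) (x : ∀ j, E (ι j)), MF 𝕜 E pd 3 ι x = 0 :=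
    MF_ne 𝕜 E pd 3 (by decide)
  have e1 : ins 𝕜 E (MF 𝕜 E pd) (QF 𝕜 E pd a) 3 (ddd (-1) (-1) (-1)) y = 0 := by
    unfold ins
    rw [Fin.sum_univ_succ, Fin.sum_univ_succ, Fin.sum_univ_succ, Fin.sum_univ_succ,
        Fin.sum_univ_zero]
    rw [filter_univ_eq _ {1} (by decide),
        filter_univ_eq _ {1, Equiv.swap 0 1, Equiv.swap 1 2 * Equiv.swap 0 1} (by decide),
        filter_univ_eq _ {1, Equiv.swap 1 2, Equiv.swap 0 1 * Equiv.swap 1 2} (by decide),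
        filter_univ_eq _ {1} (by decide)]
    rw [Finset.sum_singleton, Finset.sum_insert (by decide), Finset.sum_insert (by decide),
        Finset.sum_singleton, Finset.sum_insert (by decide), Finset.sum_insert (by decide),
        Finset.sum_singleton, Finset.sum_singleton]
    simp only [Fin.val_succ, Fin.val_zero, Nat.reduceAdd, Nat.reduceSub]
    simp only [MF0', MF2', MF3', DFinsupp.sum_zero, DFinsupp.sum_zero_index,
      smul_zero, add_zero, zero_add]
    rw [MF_m1 𝕜 E pd _ rfl, MF_m1 𝕜 E pd _ rfl, MF_m1 𝕜 E pd _ rfl]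
    simp only [DFinsupp.sum_zero_index, smul_zero, add_zero, zero_add]
  have e2 : ins 𝕜 E (QF 𝕜 E pd a) (MF 𝕜 E pd) 3 (ddd (-1) (-1) (-1)) y =
      DirectSum.of E (-1) (pd ((-2 : ℤ) •
        (a (pd (a (y 0) (y 1))) (y 2) - a (pd (a (y 0) (y 2))) (y 1)
          + a (pd (a (y 1) (y 2))) (y 0)))) := by
    unfold ins
    rw [Fin.sum_univ_succ, Fin.sum_univ_succ, Fin.sum_univ_succ, Fin.sum_univ_succ,
        Fin.sum_univ_zero]
    rw [filter_univ_eq _ {1} (by decide),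
        filter_univ_eq _ {1, Equiv.swap 0 1, Equiv.swap 1 2 * Equiv.swap 0 1} (by decide),
        filter_univ_eq _ {1, Equiv.swap 1 2, Equiv.swap 0 1 * Equiv.swap 1 2} (by decide),
        filter_univ_eq _ {1} (by decide)]
    rw [Finset.sum_singleton, Finset.sum_insert (by decide), Finset.sum_insert (by decide),
        Finset.sum_singleton, Finset.sum_insert (by decide), Finset.sum_insert (by decide),
        Finset.sum_singleton, Finset.sum_singleton]
    simp only [Fin.val_succ, Fin.val_zero, Nat.reduceAdd, Nat.reduceSub]
    simp only [QF0 𝕜 E pd a, MF2', MF3', DFinsupp.sum_zero, DFinsupp.sum_zero_index,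
      smul_zero, add_zero, zero_add]
    rw [QF3_mmm 𝕜 E pd a _ rfl rfl rfl]
    rw [of_single, DFinsupp.sum_single_index (by
        rw [MF_m2 𝕜 E pd _ rfl]
        change DirectSum.of E (-1) (pd 0) = 0
        rw [map_zero, map_zero])]
    rw [MF_m2 𝕜 E pd _ rfl, koszul_one, one_smul]
    rfl
  show ins 𝕜 E (MF 𝕜 E pd) (QF 𝕜 E pd a) 3 (ddd (-1) (-1) (-1)) y -
      ((-1 : 𝕜) ^ ((1:ℤ) * 1)) • ins 𝕜 E (QF 𝕜 E pd a) (MF 𝕜 E pd) 3 (ddd (-1) (-1) (-1)) y = _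
  rw [e1, e2, show ((-1 : 𝕜) ^ ((1:ℤ) * 1)) = -1 by norm_num, zero_sub, neg_smul, one_smul,
    neg_neg]

lemma RF3_mm2_c (y : ∀ j, E (ddd (-1) (-1) (-2) j)) :
    RF 𝕜 E pd a 3 (ddd (-1) (-1) (-2)) y =
      DirectSum.of E (-2) ((-2 : ℤ) •
        (a (pd (a (pd (y 2)) (y 0))) (y 1) - a (pd (a (pd (y 2)) (y 1))) (y 0)
          + a (pd (a (y 0) (y 1))) (pd (y 2)))) := by
  have MF0' : ∀ (ι : Fin 0 → ℤ) (x : ∀ j, E (ι j)), MF 𝕜 E pd 0 ι x = 0 :=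
    MF_ne 𝕜 E pd 0 (by decide)
  have MF2' : ∀ (ι : Fin 2 → ℤ) (x : ∀ j, E (ι j)), MF 𝕜 E pd 2 ι x = 0 :=
    MF_ne 𝕜 E pd 2 (by decide)
  have MF3' : ∀ (ι : Fin 3 → ℤ) (x : ∀ j, E (ι j)), MF 𝕜 E pd 3 ι x = 0 :=
    MF_ne 𝕜 E pd 3 (by decide)
  have e1 : ins 𝕜 E (MF 𝕜 E pd) (QF 𝕜 E pd a) 3 (ddd (-1) (-1) (-2)) y =
      DirectSum.of E (-2) ((-2 : ℤ) •
        (a (pd (a (pd (y 2)) (y 0))) (y 1) - a (pd (a (pd (y 2)) (y 1))) (y 0)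
          + a (pd (a (y 0) (y 1))) (pd (y 2)))) := by
    unfold ins
    rw [Fin.sum_univ_succ, Fin.sum_univ_succ, Fin.sum_univ_succ, Fin.sum_univ_succ,
        Fin.sum_univ_zero]
    rw [filter_univ_eq _ {1} (by decide),
        filter_univ_eq _ {1, Equiv.swap 0 1, Equiv.swap 1 2 * Equiv.swap 0 1} (by decide),
        filter_univ_eq _ {1, Equiv.swap 1 2, Equiv.swap 0 1 * Equiv.swap 1 2} (by decide),
        filter_univ_eq _ {1} (by decide)]
    rw [Finset.sum_singleton, Finset.sum_insert (by decide), Finset.sum_insert (by decide),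
        Finset.sum_singleton, Finset.sum_insert (by decide), Finset.sum_insert (by decide),
        Finset.sum_singleton, Finset.sum_singleton]
    simp only [Fin.val_succ, Fin.val_zero, Nat.reduceAdd, Nat.reduceSub]
    simp only [MF0', MF2', MF3', DFinsupp.sum_zero, DFinsupp.sum_zero_index,
      smul_zero, add_zero, zero_add]
    rw [MF_m1 𝕜 E pd _ rfl, MF_m1 𝕜 E pd _ rfl, MF_m2 𝕜 E pd _ rfl]
    simp only [DFinsupp.sum_zero_index, smul_zero, add_zero, zero_add]
    rw [of_single, DFinsupp.sum_single_index (by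
        rw [QF3_mmm 𝕜 E pd a _ rfl rfl rfl]
        change DirectSum.of E (-2) ((-2 : ℤ) • (a (pd (a 0 _)) _ - a (pd (a 0 _)) _
          + a (pd (a _ _)) 0)) = 0
        simp only [map_zero, LinearMap.zero_apply, smul_zero,
          sub_zero, add_zero, zero_sub, neg_zero, zero_add])]
    rw [QF3_mmm 𝕜 E pd a _ rfl rfl rfl]
    rw [koszul_cyc']
    rw [show ddd (-1) (-1) (-2) 2 * ddd (-1) (-1) (-2) 0 = 2 from rfl,
        show ddd (-1) (-1) (-2) 2 * ddd (-1) (-1) (-2) 1 = 2 from rfl,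
        show ((-1 : 𝕜) ^ (2 : ℤ)) = 1 by norm_num, one_mul, one_smul]
    rfl
  have e2 : ins 𝕜 E (QF 𝕜 E pd a) (MF 𝕜 E pd) 3 (ddd (-1) (-1) (-2)) y = 0 := by
    unfold ins
    rw [Fin.sum_univ_succ, Fin.sum_univ_succ, Fin.sum_univ_succ, Fin.sum_univ_succ,
        Fin.sum_univ_zero]
    rw [filter_univ_eq _ {1} (by decide),
        filter_univ_eq _ {1, Equiv.swap 0 1, Equiv.swap 1 2 * Equiv.swap 0 1} (by decide),
        filter_univ_eq _ {1, Equiv.swap 1 2, Equiv.swap 0 1 * Equiv.swap 1 2} (by decide),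
        filter_univ_eq _ {1} (by decide)]
    rw [Finset.sum_singleton, Finset.sum_insert (by decide), Finset.sum_insert (by decide),
        Finset.sum_singleton, Finset.sum_insert (by decide), Finset.sum_insert (by decide),
        Finset.sum_singleton, Finset.sum_singleton]
    simp only [Fin.val_succ, Fin.val_zero, Nat.reduceAdd, Nat.reduceSub]
    simp only [QF0 𝕜 E pd a, MF2', MF3', DFinsupp.sum_zero, DFinsupp.sum_zero_index,
      smul_zero, add_zero, zero_add]
    rw [QF3_mm2 𝕜 E pd a _ rfl rfl rfl, DFinsupp.sum_zero_index, smul_zero]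
  show ins 𝕜 E (MF 𝕜 E pd) (QF 𝕜 E pd a) 3 (ddd (-1) (-1) (-2)) y -
      ((-1 : 𝕜) ^ ((1:ℤ) * 1)) • ins 𝕜 E (QF 𝕜 E pd a) (MF 𝕜 E pd) 3 (ddd (-1) (-1) (-2)) y = _
  rw [e1, e2, smul_zero, sub_zero]

lemma RF3_mmm (X Y Z : E (-1)) :
    RF 𝕜 E pd a 3 (ddd (-1) (-1) (-1))
        (dconsV E X (dconsV E Y (dconsV E Z fun i => i.elim0))) =
      DirectSum.of E (-1) (pd ((-2 : ℤ) •
        (a (pd (a X Y)) Z - a (pd (a X Z)) Y + a (pd (a Y Z)) X))) :=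
  RF3_mmm_c 𝕜 E pd a _

lemma RF3_mm2 (X Y : E (-1)) (f : E (-2)) :
    RF 𝕜 E pd a 3 (ddd (-1) (-1) (-2))
        (dconsV E X (dconsV E Y (dconsV E f fun i => i.elim0))) =
      DirectSum.of E (-2) ((-2 : ℤ) •
        (a (pd (a (pd f) X)) Y - a (pd (a (pd f) Y)) X + a (pd (a X Y)) (pd f))) :=
  RF3_mm2_c 𝕜 E pd a _

end Compute8

/-- Let `E = E_{-2} ⊕ E_{-1}`, let `∂ : E_{-2} → E_{-1}` be a linear map
regarded as an `L∞`-structure `l₁` on `E` (with `l₂ = l₃ = 0`), and let `α` be a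
skew-symmetric bilinear map `E_{-1} × E_{-1} → E_{-2}`, i.e. a symmetric vector valued
2-form of degree 0.  If `S + α` is weak Nijenhuis with respect to `∂`, then
`[X,Y] := ∂(α(X,Y))` is a Lie bracket on `E_{-1}` and `X·f := α(X,∂f)` is a representation
of `(E_{-1},[·,·])` on `E_{-2}`. -/
theorem statement18 (𝕜 : Type) [Field 𝕜] [CharZero 𝕜]
    (E : ℤ → Type) [∀ i, AddCommGroup (E i)] [∀ i, Module 𝕜 (E i)]
    (hconc : ∀ i : ℤ, i ≠ -2 → i ≠ -1 → ∀ v : E i, v = 0)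
    (pd : E (-2) →ₗ[𝕜] E (-1))
    (a : E (-1) →ₗ[𝕜] E (-1) →ₗ[𝕜] E (-2))
    (ha : ∀ X Y : E (-1), a X Y = - a Y X)
    (hweak : rnb 𝕜 E 1 1 (delF 𝕜 E pd)
        (rnb 𝕜 E 0 1 (euler E + alF 𝕜 E a)
          (rnb 𝕜 E 0 1 (euler E + alF 𝕜 E a) (delF 𝕜 E pd))) = 0) :
    (∀ X Y Z : E (-1),
        pd (a (pd (a X Y)) Z) + pd (a (pd (a Y Z)) X) + pd (a (pd (a Z X)) Y) = 0) ∧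
      ∀ (X Y : E (-1)) (f : E (-2)),
        a (pd (a X Y)) (pd f) = a X (pd (a Y (pd f))) - a Y (pd (a X (pd f))) := by
  constructor
  · intro X Y Z
    have h : RF 𝕜 E pd a 3 (ddd (-1) (-1) (-1))
        (dconsV E X (dconsV E Y (dconsV E Z fun i => i.elim0))) = (0 : ⨁ i, E i) :=
      congrFun (congrFun (congrFun hweak 3) _) _
    rw [RF3_mmm 𝕜 E pd a] at h
    have h2 := DFunLike.congr_fun h (-1 : ℤ)
    rw [DirectSum.of_eq_same, DFinsupp.zero_apply, map_zsmul] at h2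
    have h3 : pd (a (pd (a X Y)) Z) - pd (a (pd (a X Z)) Y) + pd (a (pd (a Y Z)) X) = 0 := by
      have hne : ((-2 : ℤ) : 𝕜) ≠ 0 := by norm_num
      rw [← Int.cast_smul_eq_zsmul 𝕜] at h2
      have h5 := congrArg (fun t => ((-2 : ℤ) : 𝕜)⁻¹ • t) h2
      simp only [smul_smul, inv_mul_cancel₀ hne, one_smul, smul_zero] at h5
      rw [map_add, map_sub] at h5
      exact h5
    rw [ha Z X]
    simp only [map_neg, LinearMap.neg_apply]
    rw [← h3]
    abel
  · intro X Y f
    have h : RF 𝕜 E pd a 3 (ddd (-1) (-1) (-2))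
        (dconsV E X (dconsV E Y (dconsV E f fun i => i.elim0))) = (0 : ⨁ i, E i) :=
      congrFun (congrFun (congrFun hweak 3) _) _
    rw [RF3_mm2 𝕜 E pd a] at h
    have h2 := DFunLike.congr_fun h (-2 : ℤ)
    rw [DirectSum.of_eq_same, DFinsupp.zero_apply] at h2
    have h3 : a (pd (a (pd f) X)) Y - a (pd (a (pd f) Y)) X + a (pd (a X Y)) (pd f) = 0 := by
      have hne : ((-2 : ℤ) : 𝕜) ≠ 0 := by norm_num
      rw [← Int.cast_smul_eq_zsmul 𝕜] at h2
      have h5 := congrArg (fun t => ((-2 : ℤ) : 𝕜)⁻¹ • t) h2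
      simp only [smul_smul, inv_mul_cancel₀ hne, one_smul, smul_zero] at h5
      exact h5
    rw [ha (pd f) X, ha (pd f) Y] at h3
    simp only [map_neg, LinearMap.neg_apply] at h3
    rw [ha X (pd (a Y (pd f))), ha Y (pd (a X (pd f)))]
    rw [← sub_eq_zero, ← h3]
    abel

end RN
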